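/- Let F be a finite field with |F| = 2^a where a is even, and let x be an element of order 3 in SL_2(F). Then x normalizes some nontrivial 2-subgroup of SL_2(F): there exists a subgroup P of SL_2(F) with P nontrivial, P a 2-group, and x * P * x⁻¹ = P. -/

import Mathlib

open Matrix

theorem SL2_two_pow_even_orderThree_normalizes_two_subgroup
    {F : Type*} [Field F] [Fintype F] (a : ℕ) (ha : Even a)
    (hcard : Fintype.card F = 2 ^ a)
    (x : Matrix.SpecialLinearGroup (Fin 2) F) (hx : orderOf x = 3) :
    ∃ P : Subgroup (Matrix.SpecialLinearGroup (Fin 2) F),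
      P ≠ ⊥ ∧ IsPGroup 2 P ∧ x ∈ Subgroup.normalizer (P : Set (Matrix.SpecialLinearGroup (Fin 2) F)) := by
  classical
  -- characteristic 2
  have hchar : ringChar F = 2 := by
    obtain ⟨n, hp, hn⟩ := FiniteField.card F (ringChar F)
    rw [hcard] at hn
    have hdvd : ringChar F ∣ 2 ^ a := hn ▸ dvd_pow_self _ n.2.ne'
    exact (Nat.prime_dvd_prime_iff_eq hp Nat.prime_two).mp (hp.dvd_of_dvd_pow hdvd)
  haveI : CharP F 2 := hchar ▸ ringChar.charP F
  have h2 : (2 : F) = 0 := CharTwo.two_eq_zero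
  -- an element ω with ω² + ω + 1 = 0
  haveI : Fact (Nat.Prime 3) := ⟨by norm_num⟩
  have h3 : (3:ℕ) ∣ Fintype.card Fˣ := by
    rw [Fintype.card_units, hcard]
    obtain ⟨k, rfl⟩ := ha
    have h4 : 2 ^ (k + k) = 4 ^ k := by rw [← two_mul, pow_mul]; norm_num
    have h4m : (4:ℕ) ^ k % 3 = 1 := by rw [Nat.pow_mod]; norm_num
    have hk1 : 1 ≤ (4:ℕ) ^ k := Nat.one_le_pow _ _ (by norm_num)
    omega
  obtain ⟨ζ, hζ⟩ := exists_prime_orderOf_dvd_card (G := Fˣ) 3 h3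
  set ω : F := (ζ : F) with hωdef
  have hω3 : ω ^ 3 = 1 := by
    have : ζ ^ 3 = 1 := by rw [← hζ]; exact pow_orderOf_eq_one ζ
    have h := congrArg (Units.val) this
    simpa using h
  have hωne : ω ≠ 1 := by
    intro h
    have : ζ = 1 := Units.ext h
    rw [this, orderOf_one] at hζ; norm_num at hζ
  have hω : ω ^ 2 + ω + 1 = 0 := by
    have hfac : (ω - 1) * (ω ^ 2 + ω + 1) = ω ^ 3 - 1 := by ring
    have : (ω - 1) * (ω ^ 2 + ω + 1) = 0 := by rw [hfac, hω3, sub_self]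
    rcases mul_eq_zero.mp this with h | h
    · exact absurd (sub_eq_zero.mp h) hωne
    · exact h

  -- matrix M and its identities
  set M : Matrix (Fin 2) (Fin 2) F := (x : Matrix (Fin 2) (Fin 2) F) with hMdef
  have hdetM : M.det = 1 := x.prop
  have hM3 : M * M * M = 1 := by
    have hx3 : x ^ 3 = 1 := by rw [← hx]; exact pow_orderOf_eq_one x
    have := congrArg (fun g : Matrix.SpecialLinearGroup (Fin 2) F =>
      (g : Matrix (Fin 2) (Fin 2) F)) hx3
    simpa [pow_succ, mul_assoc, hMdef] using this
  have hCH : M * M = M.trace • M - M.det • (1 : Matrix (Fin 2) (Fin 2) F) := by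
    ext i j
    fin_cases i <;> fin_cases j <;>
      simp [Matrix.mul_apply, Fin.sum_univ_two, Matrix.trace_fin_two,
        Matrix.det_fin_two, Matrix.one_apply] <;> ring
  have hneg : ∀ A : Matrix (Fin 2) (Fin 2) F, -A = A := by
    intro A; ext i j; simp [CharTwo.neg_eq]
  have htr : M.trace = 1 := by
    by_contra htne
    set t : F := M.trace with htdef
    have hM2 : M * M = t • M - 1 := by rw [hCH, hdetM, one_smul]
    have e1 : M * M * M = ((t*t) • M - t • (1 : Matrix (Fin 2) (Fin 2) F)) - M := by
      calc M * M * M = (t • M - 1) * M := by rw [hM2]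
        _ = t • (M * M) - M := by rw [sub_mul, smul_mul_assoc, one_mul]
        _ = t • (t • M - 1) - M := by rw [hM2]
        _ = ((t*t) • M - t • (1 : Matrix (Fin 2) (Fin 2) F)) - M := by
            rw [smul_sub, smul_smul]
    have h1 : ((t*t) • M - t • (1 : Matrix (Fin 2) (Fin 2) F)) - M = 1 := by
      rw [← e1]; exact hM3
    have hkey : (t*t - 1) • M = (t + 1) • (1 : Matrix (Fin 2) (Fin 2) F) := by
      rw [sub_smul, add_smul, one_smul, one_smul]
      rw [sub_sub, sub_eq_iff_eq_add] at h1
      rw [sub_eq_iff_eq_add, h1]; abel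
    have hc : t + 1 ≠ 0 := by
      intro h
      apply htne
      have : t = -1 := eq_neg_of_add_eq_zero_left h
      rwa [CharTwo.neg_eq] at this
    have hfac : t*t - 1 = (t+1)*(t+1) := by linear_combination (-(t+1))*h2
    rw [hfac] at hkey
    set c : F := ((t+1)*(t+1))⁻¹ * (t+1) with hcdef
    have hM : M = c • (1 : Matrix (Fin 2) (Fin 2) F) := by
      have := congrArg (fun A => ((t+1)*(t+1))⁻¹ • A) hkey
      rwa [smul_smul, inv_mul_cancel₀ (mul_ne_zero hc hc), one_smul, smul_smul,
        ← hcdef] at this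
    have hc2 : c ^ 2 = 1 := by
      have := hdetM
      rw [hM, Matrix.det_smul, Matrix.det_one, mul_one] at this
      simpa using this
    have hc1 : c = 1 := by
      have hsq : (c + 1) ^ 2 = 0 := by linear_combination hc2 + c*h2 + h2
      have : c + 1 = 0 := by
        exact pow_eq_zero_iff (by norm_num) |>.mp hsq
      have : c = -1 := eq_neg_of_add_eq_zero_left this
      rwa [CharTwo.neg_eq] at this
    have hx1 : x = 1 := by
      apply Subtype.ext
      rw [← hMdef, hM, hc1, one_smul]; rfl
    rw [hx1, orderOf_one] at hx; norm_num at hx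
  have hMq : M * M = M + 1 := by
    rw [hCH, htr, hdetM, one_smul, one_smul, sub_eq_add_neg, hneg]

  -- eigenvector
  have hdet0 : (M + ω • (1 : Matrix (Fin 2) (Fin 2) F)).det = 0 := by
    have hd : M 0 0 * M 1 1 - M 0 1 * M 1 0 = 1 := by
      rw [← Matrix.det_fin_two]; exact hdetM
    have ht : M 0 0 + M 1 1 = 1 := by rw [← Matrix.trace_fin_two]; exact htr
    rw [Matrix.det_fin_two]
    simp only [Matrix.add_apply, Matrix.smul_apply, Matrix.one_apply_eq,
      Matrix.one_apply_ne (by norm_num : (0 : Fin 2) ≠ 1),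
      Matrix.one_apply_ne (by norm_num : (1 : Fin 2) ≠ 0), smul_eq_mul,
      mul_one, mul_zero, add_zero]
    linear_combination hd + ω * ht + hω
  obtain ⟨v, hv0, hv⟩ := (Matrix.exists_mulVec_eq_zero_iff).mpr hdet0
  have hv' : M *ᵥ v + ω • v = 0 := by
    have h := hv
    rwa [Matrix.add_mulVec, Matrix.smul_mulVec, Matrix.one_mulVec] at h
  have hMv : ∀ i, M i 0 * v 0 + M i 1 * v 1 = ω * v i := by
    intro i
    have := congrFun hv' i
    simp only [Matrix.mulVec, dotProduct, Fin.sum_univ_two, Pi.add_apply,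
      Pi.smul_apply, Pi.zero_apply, smul_eq_mul] at this
    linear_combination this - (ω * v i) * h2
  have hvne : v 0 ≠ 0 ∨ v 1 ≠ 0 := by
    by_contra h
    push_neg at h
    exact hv0 (funext fun i => by fin_cases i <;> simp [h.1, h.2])
  -- the nilpotent matrix N
  set u : Fin 2 → F := ![v 1, v 0] with hudef
  set N : Matrix (Fin 2) (Fin 2) F := Matrix.of (fun i j => v i * u j) with hNdef
  have hNapp : ∀ i j, N i j = v i * u j := fun i j => rfl
  have hNN : N * N = 0 := by
    ext i j
    simp only [Matrix.mul_apply, Fin.sum_univ_two, hNapp, Matrix.zero_apply, hudef]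
    simp only [Matrix.cons_val_zero, Matrix.cons_val_one, Matrix.head_cons]
    linear_combination (v i * v 0 * v 1 * u j) * h2
  have hMN : M * N = ω • N := by
    ext i j
    simp only [Matrix.mul_apply, Fin.sum_univ_two, hNapp, Matrix.smul_apply,
      smul_eq_mul]
    linear_combination (u j) * hMv i

  -- left eigenvector: u ᵥ* M = μ • u
  set w0 : F := v 1 * M 0 0 + v 0 * M 1 0 with hw0def
  set w1 : F := v 1 * M 0 1 + v 0 * M 1 1 with hw1def
  have hwv : w0 * v 0 + w1 * v 1 = 0 := by
    rw [hw0def, hw1def]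
    linear_combination v 1 * hMv 0 + v 0 * hMv 1 + (ω * v 0 * v 1) * h2
  obtain ⟨μ, hμ0, hμ1⟩ : ∃ μ : F, w0 = μ * v 1 ∧ w1 = μ * v 0 := by
    rcases eq_or_ne (v 0) 0 with h0 | h0
    · have h1 : v 1 ≠ 0 := hvne.resolve_left (not_not_intro h0)
      refine ⟨w0 / v 1, by field_simp, ?_⟩
      have hz : w1 = 0 := by
        have hz' : w1 * v 1 = 0 := by rw [h0, mul_zero, zero_add] at hwv; exact hwv
        exact (mul_eq_zero.mp hz').resolve_right h1
      rw [hz, h0, mul_zero]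
    · refine ⟨w1 / v 0, ?_, by field_simp⟩
      field_simp
      linear_combination hwv - (w1 * v 1) * h2
  have hw' : ∀ j, u 0 * M 0 j + u 1 * M 1 j = μ * u j := by
    intro j
    fin_cases j
    · simpa [hudef] using hμ0
    · simpa [hudef] using hμ1
  have hw : u ᵥ* M = μ • u := by
    funext j
    simp only [Matrix.vecMul, dotProduct, Fin.sum_univ_two, Pi.smul_apply,
      smul_eq_mul]
    exact hw' j
  have hune : u ≠ 0 := by
    intro h
    rcases hvne with h0 | h0
    · exact h0 (by simpa [hudef] using congrFun h 1)
    · exact h0 (by simpa [hudef] using congrFun h 0)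
  have hμne : μ ≠ 0 := by
    intro h
    rw [h, zero_smul] at hw
    have h1 : u ᵥ* (M * (M * M)) = 0 := by
      rw [← Matrix.vecMul_vecMul, hw, Matrix.zero_vecMul]
    rw [show M * (M * M) = 1 by rw [← mul_assoc]; exact hM3,
      Matrix.vecMul_one] at h1
    exact hune h1
  have hNM : N * M = μ • N := by
    ext i j
    simp only [Matrix.mul_apply, Fin.sum_univ_two, hNapp, Matrix.smul_apply,
      smul_eq_mul]
    linear_combination (v i) * hw' j

  -- algebraic identities
  have hNMM : N * (M * M) = (μ * μ) • N := by
    rw [← mul_assoc, hNM, smul_mul_assoc, hNM, smul_smul]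
  have hMMN : (M * M) * N = (ω * ω) • N := by
    rw [mul_assoc, hMN, mul_smul_comm, hMN, smul_smul]
  have hM3' : M * (M * M) = 1 := by rw [← mul_assoc]; exact hM3
  have expand : ∀ c d : F,
      ((1 : Matrix (Fin 2) (Fin 2) F) + c • N) * (1 + d • N) = 1 + (c + d) • N := by
    intro c d
    rw [mul_add, mul_one, add_mul, one_mul, smul_mul_assoc, mul_smul_comm, hNN,
      smul_zero, smul_zero, add_zero, add_smul, add_assoc]
  have hsq : ∀ c : F,
      ((1 : Matrix (Fin 2) (Fin 2) F) + c • N) * (1 + c • N) = 1 := by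
    intro c
    rw [expand, CharTwo.add_self_eq_zero, zero_smul, add_zero]
  have hconj1 : ∀ c : F, M * (1 + c • N) * (M * M) = 1 + ((c * ω) * (μ * μ)) • N := by
    intro c
    have e : M * (1 + c • N) = M + (c * ω) • N := by
      rw [mul_add, mul_one, mul_smul_comm, hMN, smul_smul]
    rw [e, add_mul, smul_mul_assoc, hNMM, hM3', smul_smul, mul_assoc]
  have hconj2 : ∀ d : F, (M * M) * (1 + d • N) * M = 1 + ((d * (ω * ω)) * μ) • N := by
    intro d
    have e : (M * M) * (1 + d • N) = M * M + (d * (ω * ω)) • N := by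
      rw [mul_add, mul_one, mul_smul_comm, hMMN, smul_smul]
    rw [e, add_mul, smul_mul_assoc, hNM, hM3, smul_smul, mul_assoc]
  -- the subgroup P
  let P : Subgroup (Matrix.SpecialLinearGroup (Fin 2) F) :=
    { carrier := {g : Matrix.SpecialLinearGroup (Fin 2) F | ∃ c : F, (g : Matrix (Fin 2) (Fin 2) F) = 1 + c • N}
      one_mem' := ⟨0, by simp⟩
      mul_mem' := by
        rintro g h ⟨c, hc⟩ ⟨d, hd⟩
        exact ⟨c + d, by
          rw [Matrix.SpecialLinearGroup.coe_mul, hc, hd, expand]⟩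
      inv_mem' := by
        rintro g ⟨c, hc⟩
        have hg2 : g * g = 1 := Subtype.ext (by
          rw [Matrix.SpecialLinearGroup.coe_mul, hc, hsq]; rfl)
        have hinv : g⁻¹ = g := inv_eq_of_mul_eq_one_right hg2
        exact ⟨c, by rw [hinv, hc]⟩ }
  have hmem : ∀ g : Matrix.SpecialLinearGroup (Fin 2) F,
      g ∈ P ↔ ∃ c : F, (g : Matrix (Fin 2) (Fin 2) F) = 1 + c • N := fun g => Iff.rfl
  refine ⟨P, ?_, ?_, ?_⟩
  · -- P ≠ ⊥
    have hdet1N : ((1 : Matrix (Fin 2) (Fin 2) F) + N).det = 1 := by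
      rw [Matrix.det_fin_two]
      simp only [Matrix.add_apply, Matrix.one_apply_eq,
        Matrix.one_apply_ne (by norm_num : (0 : Fin 2) ≠ 1),
        Matrix.one_apply_ne (by norm_num : (1 : Fin 2) ≠ 0), zero_add]
      simp only [hNapp, hudef]
      simp only [Matrix.cons_val_zero, Matrix.cons_val_one, Matrix.head_cons]
      linear_combination (v 0 * v 1) * h2
    have hNne1 : (1 : Matrix (Fin 2) (Fin 2) F) + N ≠ 1 := by
      intro heq
      rcases hvne with h0 | h0
      · have h' := congrFun (congrFun heq 0) 1
        simp only [Matrix.add_apply, hNapp, hudef,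
          Matrix.one_apply_ne (by norm_num : (0 : Fin 2) ≠ 1)] at h'
        simp only [Matrix.cons_val_one, Matrix.head_cons] at h'
        rw [zero_add] at h'
        exact h0 (mul_self_eq_zero.mp h')
      · have h' := congrFun (congrFun heq 1) 0
        simp only [Matrix.add_apply, hNapp, hudef,
          Matrix.one_apply_ne (by norm_num : (1 : Fin 2) ≠ 0)] at h'
        simp only [Matrix.cons_val_zero] at h'
        rw [zero_add] at h'
        exact h0 (mul_self_eq_zero.mp h')
    intro hbot
    have hg0 : (⟨1 + N, hdet1N⟩ : Matrix.SpecialLinearGroup (Fin 2) F) ∈ P :=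
      (hmem _).mpr ⟨1, by rw [one_smul]⟩
    have h1N := (Subgroup.eq_bot_iff_forall P).mp hbot _ hg0
    exact hNne1 (by simpa using congrArg Subtype.val h1N)
  · -- IsPGroup
    intro g
    refine ⟨1, ?_⟩
    obtain ⟨c, hc⟩ := g.2
    have hg2 : (g : Matrix.SpecialLinearGroup (Fin 2) F) * (g : Matrix.SpecialLinearGroup (Fin 2) F) = 1 := Subtype.ext (by
      rw [Matrix.SpecialLinearGroup.coe_mul, hc, hsq]; rfl)
    refine Subtype.ext ?_
    rw [SubgroupClass.coe_pow, pow_one, pow_two, hg2, OneMemClass.coe_one]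
  · -- normalizer
    have hx3 : x * x * x = 1 := by
      have h := pow_orderOf_eq_one x
      rw [hx] at h
      simpa [pow_succ] using h
    have hxi : x⁻¹ = x * x :=
      inv_eq_of_mul_eq_one_right (by rw [← mul_assoc]; exact hx3)
    have hxival : ((x⁻¹ : Matrix.SpecialLinearGroup (Fin 2) F) : Matrix (Fin 2) (Fin 2) F) = M * M := by
      rw [hxi, Matrix.SpecialLinearGroup.coe_mul, ← hMdef]
    rw [Subgroup.mem_normalizer_iff]
    intro h
    constructor
    · rintro ⟨c, hc⟩
      refine ⟨(c * ω) * (μ * μ), ?_⟩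
      rw [Matrix.SpecialLinearGroup.coe_mul, Matrix.SpecialLinearGroup.coe_mul,
        hxival, ← hMdef, hc]
      exact hconj1 c
    · rintro ⟨d, hd⟩
      rw [Matrix.SpecialLinearGroup.coe_mul, Matrix.SpecialLinearGroup.coe_mul,
        hxival, ← hMdef] at hd
      refine ⟨(d * (ω * ω)) * μ, ?_⟩
      have key : (M * M) * (M * (h : Matrix (Fin 2) (Fin 2) F) * (M * M)) * M
          = (M * M) * (1 + d • N) * M := by rw [hd]
      rw [hconj2] at key
      rw [← key]
      simp only [← mul_assoc]
      rw [hM3, one_mul, mul_assoc _ M M, mul_assoc _ M (M*M), ← mul_assoc M M M,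
        hM3, mul_one]
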